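/- Let K > 0. There exists a constant C > 0, depending only on K, with the following property. Let L > 0, let γ : ℝ → ℝ be twice continuously differentiable and L-periodic with |γ'(x)| ≤ 1/2 and |γ''(x)| ≤ K for all x, let c ∈ ℝ, and set A(x) = x - γ(x) - c. Then for every twice continuously differentiable L-periodic f : ℝ → ℂ: ‖f∘A⁻¹‖²_{H²(0,L)} ≤ C ‖f‖²_{H²(0,L)}. -/

import Mathlib

/-- The `H²`-norm over one period `(0, L)`. -/
noncomputable def H2norm {E : Type*} [NormedAddCommGroup E] [NormedSpace ℝ E]
    (L : ℝ) (f : ℝ → E) : ℝ :=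
  Real.sqrt ((∫ x in (0:ℝ)..L, ‖f x‖ ^ 2) + (∫ x in (0:ℝ)..L, ‖deriv f x‖ ^ 2)
    + ∫ x in (0:ℝ)..L, ‖deriv (deriv f) x‖ ^ 2)

/-- The derivative of a periodic function is periodic. -/
lemma periodic_deriv_aux {E : Type*} [NormedAddCommGroup E] [NormedSpace ℝ E]
    {f : ℝ → E} {L : ℝ} (hf : Function.Periodic f L) :
    Function.Periodic (deriv f) L := by
  intro x
  have h1 : (fun y => f (y + L)) = f := funext fun y => hf y
  calc deriv f (x + L) = deriv (fun y => f (y + L)) x := (deriv_comp_add_const f L x).symm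
    _ = deriv f x := by rw [h1]

/-- Change of variables estimate: if `g` is the inverse of a map with derivative `W ∘ g`
pointwise inverse `gd`, then the integral of `h ∘ g` over a period is controlled. -/
lemma comp_integral_le {L : ℝ} (hL : 0 ≤ L) (g gd W h : ℝ → ℝ)
    (hgder : ∀ x, HasDerivAt g (gd x) x) (hgdc : Continuous gd)
    (hWc : Continuous W) (hWle : ∀ u, W u ≤ 3 / 2)
    (hinv : ∀ x, gd x * W (g x) = 1)
    (hgL : g L = g 0 + L)
    (hhc : Continuous h) (hh0 : ∀ x, 0 ≤ h x) (hhp : Function.Periodic h L) :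
    (∫ x in (0:ℝ)..L, h (g x)) ≤ 3 / 2 * ∫ x in (0:ℝ)..L, h x := by
  have key : (∫ x in (0:ℝ)..L, h (g x)) = ∫ u in (g 0)..(g L), W u * h u := by
    rw [← intervalIntegral.integral_comp_smul_deriv (fun x _ => hgder x) hgdc.continuousOn
      (g := fun u => W u * h u) (hWc.mul hhc)]
    apply intervalIntegral.integral_congr
    intro x _
    show h (g x) = gd x • ((fun u => W u * h u) ∘ g) x
    simp only [Function.comp_apply, smul_eq_mul]
    rw [← mul_assoc, hinv x, one_mul]
  rw [key, hgL]
  have h1 : (∫ u in (g 0)..(g 0 + L), W u * h u) ≤ ∫ u in (g 0)..(g 0 + L), 3 / 2 * h u := by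
    apply intervalIntegral.integral_mono_on (by linarith)
      ((hWc.mul hhc).intervalIntegrable _ _) ((continuous_const.mul hhc).intervalIntegrable _ _)
    intro x _
    show W x * h x ≤ 3 / 2 * h x
    nlinarith [hWle x, hh0 x]
  have h2 : (∫ u in (g 0)..(g 0 + L), (3:ℝ) / 2 * h u) = 3 / 2 * ∫ u in (g 0)..(g 0 + L), h u :=
    intervalIntegral.integral_const_mul _ _
  have h3 : (∫ u in (g 0)..(g 0 + L), h u) = ∫ u in (0:ℝ)..L, h u := by
    have := hhp.intervalIntegral_add_eq (g 0) 0
    rwa [zero_add] at this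
  rw [h2, h3] at h1
  exact h1

set_option maxHeartbeats 1000000 in
theorem composition_inverse_H2_bound (K : ℝ) (hK : 0 < K) :
    ∃ C : ℝ, 0 < C ∧
      ∀ L : ℝ, 0 < L →
      ∀ γ : ℝ → ℝ, ContDiff ℝ 2 γ → Function.Periodic γ L →
      (∀ x : ℝ, |deriv γ x| ≤ 1 / 2) → (∀ x : ℝ, |deriv (deriv γ) x| ≤ K) →
      ∀ (c : ℝ) (A : ℝ → ℝ), (∀ x : ℝ, A x = x - γ x - c) →
      ∀ f : ℝ → ℂ, ContDiff ℝ 2 f → Function.Periodic f L →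
      H2norm L (f ∘ Function.invFun A) ^ 2 ≤ C * H2norm L f ^ 2 := by
  refine ⟨192 * K ^ 2 + 48, by positivity, ?_⟩
  intro L hL γ hγ hγper hγ'le hγ''le c A hA f hf hfper
  -- basic regularity of γ
  have hγ1 : Differentiable ℝ γ := hγ.differentiable (by norm_num)
  have hγd : ContDiff ℝ 1 (deriv γ) := by
    have hγ2 := hγ
    rw [show (2 : WithTop ℕ∞) = 1 + 1 from by norm_num, contDiff_succ_iff_deriv] at hγ2
    exact hγ2.2.2
  have hγd1 : Differentiable ℝ (deriv γ) := hγd.differentiable (by norm_num)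
  have hγdc : Continuous (deriv γ) := hγd1.continuous
  have hγddc : Continuous (deriv (deriv γ)) := (contDiff_one_iff_deriv.mp hγd).2
  -- bounds on W = 1 - γ'
  have hWlb : ∀ x, (1:ℝ) / 2 ≤ 1 - deriv γ x := fun x => by
    have := abs_le.mp (hγ'le x); linarith [this.2]
  have hWub : ∀ x, 1 - deriv γ x ≤ 3 / 2 := fun x => by
    have := abs_le.mp (hγ'le x); linarith [this.1]
  have hWpos : ∀ x, (0:ℝ) < 1 - deriv γ x := fun x => lt_of_lt_of_le (by norm_num) (hWlb x)
  -- derivative of A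
  have hA' : ∀ x, HasDerivAt A (1 - deriv γ x) x := by
    intro x
    have : HasDerivAt (fun x => x - γ x - c) (1 - deriv γ x) x :=
      ((hasDerivAt_id x).sub (hγ1 x).hasDerivAt).sub_const c
    exact (funext hA : A = _) ▸ this
  have hAc : Continuous A := by
    have : Differentiable ℝ A := fun x => (hA' x).differentiableAt
    exact this.continuous
  have hAmono : StrictMono A :=
    strictMono_of_deriv_pos fun x => (hA' x).deriv ▸ hWpos x
  -- surjectivity of A
  have hhalfder : ∀ x : ℝ, HasDerivAt (fun y : ℝ => y / 2) (1 / 2) x := by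
    intro x
    have := (hasDerivAt_id x).div_const 2
    simpa using this
  have hmono2 : Monotone fun x => A x - x / 2 := by
    apply monotone_of_deriv_nonneg
    · exact fun x => ((hA' x).sub (hhalfder x)).differentiableAt
    · intro x
      rw [HasDerivAt.deriv (f := fun x => A x - x / 2) ((hA' x).sub (hhalfder x))]
      have := hWlb x; linarith
  have hAtop : Filter.Tendsto A Filter.atTop Filter.atTop := by
    have hhalf : Filter.Tendsto (fun x : ℝ => A 0 + x / 2) Filter.atTop Filter.atTop :=
      Filter.tendsto_atTop_add_const_left _ _
        (Filter.Tendsto.atTop_div_const two_pos Filter.tendsto_id)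
    refine Filter.tendsto_atTop_mono' Filter.atTop ?_ hhalf
    refine Filter.eventually_atTop.mpr ⟨0, fun x hx => ?_⟩
    have h := hmono2 hx
    dsimp only at h ⊢
    linarith
  have hAbot : Filter.Tendsto A Filter.atBot Filter.atBot := by
    have hhalf : Filter.Tendsto (fun x : ℝ => A 0 + x / 2) Filter.atBot Filter.atBot :=
      Filter.tendsto_atBot_add_const_left _ _
        (Filter.Tendsto.atBot_div_const two_pos Filter.tendsto_id)
    refine Filter.tendsto_atBot_mono' Filter.atBot ?_ hhalf
    refine Filter.eventually_atBot.mpr ⟨0, fun x hx => ?_⟩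
    have h := hmono2 hx
    dsimp only at h ⊢
    linarith
  have hAsurj : Function.Surjective A := hAc.surjective hAtop hAbot
  set g := Function.invFun A with hgdef
  have hright : ∀ y, A (g y) = y := fun y => Function.rightInverse_invFun hAsurj y
  -- continuity of g
  have hgc : Continuous g := by
    have hge : g = ⇑(StrictMono.orderIsoOfSurjective A hAmono hAsurj).symm := by
      funext y
      apply hAmono.injective
      rw [hright y]
      exact ((StrictMono.orderIsoOfSurjective A hAmono hAsurj).apply_symm_apply y).symm
    rw [hge]
    exact (StrictMono.orderIsoOfSurjective A hAmono hAsurj).symm.continuous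
  -- derivative of g
  set gd : ℝ → ℝ := fun y => (1 - deriv γ (g y))⁻¹ with hgddef
  have hgder : ∀ y, HasDerivAt g (gd y) y := fun y =>
    HasDerivAt.of_local_left_inverse hgc.continuousAt (hA' (g y)) (ne_of_gt (hWpos (g y)))
      (Filter.Eventually.of_forall hright)
  have hgdc : Continuous gd :=
    (continuous_const.sub (hγdc.comp hgc)).inv₀ fun y => ne_of_gt (hWpos (g y))
  have hgdpos : ∀ y, 0 < gd y := fun y => inv_pos.mpr (hWpos (g y))
  have hgdle : ∀ y, gd y ≤ 2 := fun y => by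
    rw [hgddef]
    calc (1 - deriv γ (g y))⁻¹ ≤ (1/2 : ℝ)⁻¹ :=
          (inv_anti₀ (by norm_num) (hWlb (g y)))
      _ = 2 := by norm_num
  -- periodicity transfers
  have hgadd : ∀ y, g (y + L) = g y + L := by
    intro y
    apply hAmono.injective
    rw [hright]
    have : A (g y + L) = A (g y) + L := by
      rw [hA, hA, hγper (g y)]; ring
    rw [this, hright]
  have hgL : g L = g 0 + L := by have := hgadd 0; rwa [zero_add] at this
  have hγ'per : Function.Periodic (deriv γ) L := periodic_deriv_aux hγper
  have hf'per : Function.Periodic (deriv f) L := periodic_deriv_aux hfper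
  have hf''per : Function.Periodic (deriv (deriv f)) L := periodic_deriv_aux hf'per
  -- regularity of f
  have hf1 : Differentiable ℝ f := hf.differentiable (by norm_num)
  have hfd : ContDiff ℝ 1 (deriv f) := by
    have hf2 := hf
    rw [show (2 : WithTop ℕ∞) = 1 + 1 from by norm_num, contDiff_succ_iff_deriv] at hf2
    exact hf2.2.2
  have hfd1 : Differentiable ℝ (deriv f) := hfd.differentiable (by norm_num)
  have hfdc : Continuous (deriv f) := hfd1.continuous
  have hfddc : Continuous (deriv (deriv f)) := (contDiff_one_iff_deriv.mp hfd).2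
  -- first derivative of f ∘ g
  have hfg1 : ∀ y, HasDerivAt (f ∘ g) (gd y • deriv f (g y)) y := fun y =>
    HasDerivAt.scomp y ((hf1 (g y)).hasDerivAt) (hgder y)
  have hderiv1 : deriv (f ∘ g) = fun y => gd y • deriv f (g y) :=
    funext fun y => (hfg1 y).deriv
  -- derivative of gd
  set gdd : ℝ → ℝ := fun y => gd y * deriv (deriv γ) (g y) / (1 - deriv γ (g y)) ^ 2
    with hgdddef
  have hgdder : ∀ y, HasDerivAt gd (gdd y) y := by
    intro y
    have hinner : HasDerivAt (fun y => 1 - deriv γ (g y)) (-(gd y * deriv (deriv γ) (g y))) y := by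
      have hcomp : HasDerivAt (fun y => deriv γ (g y)) (gd y • deriv (deriv γ) (g y)) y :=
        HasDerivAt.scomp y ((hγd1 (g y)).hasDerivAt) (hgder y)
      have := (hasDerivAt_const y (1:ℝ)).sub hcomp
      exact this.congr_deriv (by simp)
    have := hinner.inv (ne_of_gt (hWpos (g y)))
    exact this.congr_deriv (by simp [hgdddef])
  have hgddle : ∀ y, |gdd y| ≤ 8 * K := by
    intro y
    rw [hgdddef]
    have h1 : |gd y| ≤ 2 := abs_le.mpr ⟨by linarith [hgdpos y], hgdle y⟩
    have h2 : |deriv (deriv γ) (g y)| ≤ K := hγ''le (g y)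
    have h3 : ((1:ℝ)/2) ^ 2 ≤ (1 - deriv γ (g y)) ^ 2 := by
      have := hWlb (g y); nlinarith
    have h4 : |((1 - deriv γ (g y)) ^ 2)⁻¹| ≤ 4 := by
      rw [abs_inv, abs_of_nonneg (sq_nonneg _)]
      calc ((1 - deriv γ (g y)) ^ 2)⁻¹ ≤ (((1:ℝ)/2) ^ 2)⁻¹ :=
            inv_anti₀ (by norm_num) h3
        _ = 4 := by norm_num
    calc |gd y * deriv (deriv γ) (g y) / (1 - deriv γ (g y)) ^ 2|
        = |gd y| * |deriv (deriv γ) (g y)| * |((1 - deriv γ (g y)) ^ 2)⁻¹| := by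
          rw [div_eq_mul_inv, abs_mul, abs_mul]
      _ ≤ 2 * K * 4 := by
          apply mul_le_mul (mul_le_mul h1 h2 (abs_nonneg _) (by norm_num)) h4
            (abs_nonneg _) (by positivity)
      _ = 8 * K := by ring
  -- second derivative of f ∘ g
  have hfg2 : ∀ y, HasDerivAt (fun y => gd y • deriv f (g y))
      (gd y • (gd y • deriv (deriv f) (g y)) + gdd y • deriv f (g y)) y := by
    intro y
    have hcomp : HasDerivAt (fun y => deriv f (g y)) (gd y • deriv (deriv f) (g y)) y :=
      HasDerivAt.scomp y ((hfd1 (g y)).hasDerivAt) (hgder y)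
    exact (hgdder y).smul hcomp
  have hderiv2 : deriv (deriv (f ∘ g)) = fun y =>
      gd y • (gd y • deriv (deriv f) (g y)) + gdd y • deriv f (g y) := by
    rw [hderiv1]
    exact funext fun y => (hfg2 y).deriv
  -- continuity of everything
  have hc0 : Continuous (f ∘ g) := hf1.continuous.comp hgc
  have hc1 : Continuous (deriv (f ∘ g)) := by
    rw [hderiv1]
    exact hgdc.smul (hfdc.comp hgc)
  have hc2 : Continuous (deriv (deriv (f ∘ g))) := by
    rw [hderiv2]
    have hgddc : Continuous gdd := by
      apply Continuous.div (hgdc.mul (hγddc.comp hgc))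
        ((continuous_const.sub (hγdc.comp hgc)).pow 2)
      exact fun y => pow_ne_zero 2 (ne_of_gt (hWpos (g y)))
    exact (hgdc.smul (hgdc.smul (hfddc.comp hgc))).add (hgddc.smul (hfdc.comp hgc))
  -- the three base integrals
  set I0 := ∫ x in (0:ℝ)..L, ‖f x‖ ^ 2 with hI0
  set I1 := ∫ x in (0:ℝ)..L, ‖deriv f x‖ ^ 2 with hI1
  set I2 := ∫ x in (0:ℝ)..L, ‖deriv (deriv f) x‖ ^ 2 with hI2
  have hI0nn : 0 ≤ I0 := intervalIntegral.integral_nonneg hL.le fun x _ => by positivity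
  have hI1nn : 0 ≤ I1 := intervalIntegral.integral_nonneg hL.le fun x _ => by positivity
  have hI2nn : 0 ≤ I2 := intervalIntegral.integral_nonneg hL.le fun x _ => by positivity
  -- the substitution estimates
  have hW : ∀ (h : ℝ → ℝ), Continuous h → (∀ x, 0 ≤ h x) → Function.Periodic h L →
      (∫ x in (0:ℝ)..L, h (g x)) ≤ 3 / 2 * ∫ x in (0:ℝ)..L, h x := by
    intro h hhc hh0 hhp
    apply comp_integral_le hL.le g gd (fun u => 1 - deriv γ u) h hgder hgdc
      (continuous_const.sub hγdc) hWub
      (fun x => inv_mul_cancel₀ (ne_of_gt (hWpos (g x)))) hgL hhc hh0 hhp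
  have hsub0 : (∫ x in (0:ℝ)..L, ‖f (g x)‖ ^ 2) ≤ 3 / 2 * I0 :=
    hW (fun x => ‖f x‖ ^ 2) (hf1.continuous.norm.pow 2) (fun x => by positivity)
      (fun x => by simp [hfper x])
  have hsub1 : (∫ x in (0:ℝ)..L, ‖deriv f (g x)‖ ^ 2) ≤ 3 / 2 * I1 :=
    hW (fun x => ‖deriv f x‖ ^ 2) (hfdc.norm.pow 2) (fun x => by positivity) (fun x => by simp [hf'per x])
  have hsub2 : (∫ x in (0:ℝ)..L, ‖deriv (deriv f) (g x)‖ ^ 2) ≤ 3 / 2 * I2 :=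
    hW (fun x => ‖deriv (deriv f) x‖ ^ 2) (hfddc.norm.pow 2) (fun x => by positivity) (fun x => by simp [hf''per x])
  -- bound J0
  have hJ0 : (∫ x in (0:ℝ)..L, ‖(f ∘ g) x‖ ^ 2) ≤ 3 / 2 * I0 := by
    have : (∫ x in (0:ℝ)..L, ‖(f ∘ g) x‖ ^ 2) = ∫ x in (0:ℝ)..L, ‖f (g x)‖ ^ 2 := rfl
    rw [this]; exact hsub0
  -- bound J1
  have hJ1 : (∫ x in (0:ℝ)..L, ‖deriv (f ∘ g) x‖ ^ 2) ≤ 6 * I1 := by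
    have step1 : (∫ x in (0:ℝ)..L, ‖deriv (f ∘ g) x‖ ^ 2)
        ≤ ∫ x in (0:ℝ)..L, 4 * ‖deriv f (g x)‖ ^ 2 := by
      apply intervalIntegral.integral_mono_on hL.le
        ((hc1.norm.pow 2).intervalIntegrable _ _)
        ((continuous_const.mul ((hfdc.comp hgc).norm.pow 2)).intervalIntegrable _ _)
      intro x _
      simp only [Pi.mul_apply, Pi.pow_apply]
      simp only [Function.comp_apply]
      rw [hderiv1]
      simp only [norm_smul, Real.norm_eq_abs, mul_pow]
      have h1 : |gd x| ≤ 2 := abs_le.mpr ⟨by linarith [hgdpos x], hgdle x⟩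
      have h2 : |gd x| ^ 2 ≤ 4 := by nlinarith [abs_nonneg (gd x)]
      have h3 : (0:ℝ) ≤ ‖deriv f (g x)‖ ^ 2 := sq_nonneg _
      nlinarith
    have step2 : (∫ x in (0:ℝ)..L, 4 * ‖deriv f (g x)‖ ^ 2)
        = 4 * ∫ x in (0:ℝ)..L, ‖deriv f (g x)‖ ^ 2 :=
      intervalIntegral.integral_const_mul _ _
    calc (∫ x in (0:ℝ)..L, ‖deriv (f ∘ g) x‖ ^ 2)
        ≤ 4 * ∫ x in (0:ℝ)..L, ‖deriv f (g x)‖ ^ 2 := step2 ▸ step1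
      _ ≤ 4 * (3 / 2 * I1) := by
          apply mul_le_mul_of_nonneg_left hsub1 (by norm_num)
      _ = 6 * I1 := by ring
  -- bound J2
  have hJ2 : (∫ x in (0:ℝ)..L, ‖deriv (deriv (f ∘ g)) x‖ ^ 2)
      ≤ 128 * K ^ 2 * (3 / 2 * I1) + 32 * (3 / 2 * I2) := by
    have step1 : (∫ x in (0:ℝ)..L, ‖deriv (deriv (f ∘ g)) x‖ ^ 2)
        ≤ ∫ x in (0:ℝ)..L,
            (128 * K ^ 2 * ‖deriv f (g x)‖ ^ 2 + 32 * ‖deriv (deriv f) (g x)‖ ^ 2) := by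
      apply intervalIntegral.integral_mono_on hL.le
        ((hc2.norm.pow 2).intervalIntegrable _ _)
        (((continuous_const.mul ((hfdc.comp hgc).norm.pow 2)).add
          (continuous_const.mul ((hfddc.comp hgc).norm.pow 2))).intervalIntegrable _ _)
      intro x _
      simp only [Pi.mul_apply, Pi.pow_apply, Pi.add_apply]
      simp only [Function.comp_apply]
      rw [hderiv2]
      have hb : ‖gd x • (gd x • deriv (deriv f) (g x)) + gdd x • deriv f (g x)‖
          ≤ 4 * ‖deriv (deriv f) (g x)‖ + 8 * K * ‖deriv f (g x)‖ := by
        calc ‖gd x • (gd x • deriv (deriv f) (g x)) + gdd x • deriv f (g x)‖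
            ≤ ‖gd x • (gd x • deriv (deriv f) (g x))‖ + ‖gdd x • deriv f (g x)‖ :=
              norm_add_le _ _
          _ = |gd x| * (|gd x| * ‖deriv (deriv f) (g x)‖) + |gdd x| * ‖deriv f (g x)‖ := by
              simp [norm_smul]
          _ = |gd x| ^ 2 * ‖deriv (deriv f) (g x)‖ + |gdd x| * ‖deriv f (g x)‖ := by ring
          _ ≤ 4 * ‖deriv (deriv f) (g x)‖ + 8 * K * ‖deriv f (g x)‖ := by
              have h1 : |gd x| ≤ 2 := abs_le.mpr ⟨by linarith [hgdpos x], hgdle x⟩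
              have h1sq : |gd x| ^ 2 ≤ 4 := by nlinarith [abs_nonneg (gd x)]
              exact add_le_add
                (mul_le_mul_of_nonneg_right h1sq (norm_nonneg _))
                (mul_le_mul_of_nonneg_right (hgddle x) (norm_nonneg _))
      have hbn : (0:ℝ) ≤ 4 * ‖deriv (deriv f) (g x)‖ + 8 * K * ‖deriv f (g x)‖ := by
        have := norm_nonneg (deriv (deriv f) (g x))
        have := norm_nonneg (deriv f (g x))
        positivity
      calc ‖gd x • (gd x • deriv (deriv f) (g x)) + gdd x • deriv f (g x)‖ ^ 2
          ≤ (4 * ‖deriv (deriv f) (g x)‖ + 8 * K * ‖deriv f (g x)‖) ^ 2 := by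
            apply pow_le_pow_left₀ (norm_nonneg _) hb
        _ ≤ 128 * K ^ 2 * ‖deriv f (g x)‖ ^ 2 + 32 * ‖deriv (deriv f) (g x)‖ ^ 2 := by
            nlinarith [sq_nonneg (4 * ‖deriv (deriv f) (g x)‖ - 8 * K * ‖deriv f (g x)‖)]
    have step2 : (∫ x in (0:ℝ)..L,
          (128 * K ^ 2 * ‖deriv f (g x)‖ ^ 2 + 32 * ‖deriv (deriv f) (g x)‖ ^ 2))
        = 128 * K ^ 2 * (∫ x in (0:ℝ)..L, ‖deriv f (g x)‖ ^ 2)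
          + 32 * ∫ x in (0:ℝ)..L, ‖deriv (deriv f) (g x)‖ ^ 2 := by
      have i1 : IntervalIntegrable (fun x => 128 * K ^ 2 * ‖deriv f (g x)‖ ^ 2)
          MeasureTheory.volume 0 L :=
        (continuous_const.mul ((hfdc.comp hgc).norm.pow 2)).intervalIntegrable _ _
      have i2 : IntervalIntegrable (fun x => 32 * ‖deriv (deriv f) (g x)‖ ^ 2)
          MeasureTheory.volume 0 L :=
        (continuous_const.mul ((hfddc.comp hgc).norm.pow 2)).intervalIntegrable _ _
      rw [intervalIntegral.integral_add i1 i2,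
        intervalIntegral.integral_const_mul, intervalIntegral.integral_const_mul]
    calc (∫ x in (0:ℝ)..L, ‖deriv (deriv (f ∘ g)) x‖ ^ 2)
        ≤ 128 * K ^ 2 * (∫ x in (0:ℝ)..L, ‖deriv f (g x)‖ ^ 2)
          + 32 * ∫ x in (0:ℝ)..L, ‖deriv (deriv f) (g x)‖ ^ 2 := step2 ▸ step1
      _ ≤ 128 * K ^ 2 * (3 / 2 * I1) + 32 * (3 / 2 * I2) := by
          have h1 := mul_le_mul_of_nonneg_left hsub1 (by positivity : (0:ℝ) ≤ 128 * K ^ 2)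
          have h2 := mul_le_mul_of_nonneg_left hsub2 (by norm_num : (0:ℝ) ≤ 32)
          linarith
  -- nonnegativity of LHS integrals
  have hJ0nn : 0 ≤ ∫ x in (0:ℝ)..L, ‖(f ∘ g) x‖ ^ 2 :=
    intervalIntegral.integral_nonneg hL.le fun x _ => by positivity
  have hJ1nn : 0 ≤ ∫ x in (0:ℝ)..L, ‖deriv (f ∘ g) x‖ ^ 2 :=
    intervalIntegral.integral_nonneg hL.le fun x _ => by positivity
  have hJ2nn : 0 ≤ ∫ x in (0:ℝ)..L, ‖deriv (deriv (f ∘ g)) x‖ ^ 2 :=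
    intervalIntegral.integral_nonneg hL.le fun x _ => by positivity
  -- assemble
  have hLHS : H2norm L (f ∘ g) ^ 2
      = (∫ x in (0:ℝ)..L, ‖(f ∘ g) x‖ ^ 2) + (∫ x in (0:ℝ)..L, ‖deriv (f ∘ g) x‖ ^ 2)
        + ∫ x in (0:ℝ)..L, ‖deriv (deriv (f ∘ g)) x‖ ^ 2 := by
    rw [H2norm, Real.sq_sqrt (by linarith)]
  have hRHS : H2norm L f ^ 2 = I0 + I1 + I2 := by
    rw [H2norm, Real.sq_sqrt (by linarith)]
  rw [hLHS, hRHS]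
  nlinarith [mul_nonneg (sq_nonneg K) hI0nn, mul_nonneg (sq_nonneg K) hI1nn,
    mul_nonneg (sq_nonneg K) hI2nn]
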